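/- Define $\phi(h) = \mu\{F > M + h\}$ for $h \ge 0$, where $\phi$ is nonincreasing with $\phi(0) \le 1/2$, and suppose the left upper derivative satisfies $\phi'(h) \le -c n^{1/p}\phi(h)\log^{1-1/p}(1/\phi(h))$ whenever $\phi(h) > 0$. Then $\phi(h) \le \frac{1}{2}\exp(-(c/p)^p n h^p)$ for all $h \ge 0$. -/

import Mathlib

open MeasureTheory Set Filter Topology


private lemma rpow_superadd {a b p : ℝ} (ha : 0 ≤ a) (hb : 0 ≤ b) (hp : 1 ≤ p) :
    a ^ p + b ^ p ≤ (a + b) ^ p := by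
  lift a to NNReal using ha
  lift b to NNReal using hb
  have := NNReal.add_rpow_le_rpow_add a b hp
  exact_mod_cast this

private lemma comparison_aux (c p : ℝ) (hc : 0 < c) (hp1 : 1 ≤ p) (n : ℕ) (hn : 1 ≤ n)
    (φ : ℝ → ℝ) (hmono : AntitoneOn φ (Set.Ici 0))
    (hφ0 : φ 0 ≤ 1 / 2)
    (hcont : ∀ T : ℝ, 0 ≤ T → ContinuousOn φ (Set.Icc 0 T))
    (hderiv : ∀ h : ℝ, 0 < h → 0 < φ h →
      Filter.limsup (fun s => (φ h - φ s) / (h - s)) (nhdsWithin h (Set.Iio h)) ≤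
        -(c * (n : ℝ) ^ ((1 : ℝ) / p) * φ h * (Real.log (1 / φ h)) ^ (1 - 1 / p)))
    (v₀ k' : ℝ) (hv₀ : 0 < v₀) (hk'0 : 0 < k')
    (hk' : p * k' < c * (n : ℝ) ^ ((1 : ℝ) / p))
    (hstart : v₀ ^ p < Real.log 2) :
    ∀ t : ℝ, 0 ≤ t → φ t ≤ Real.exp (-(v₀ + k' * t) ^ p) := by
  have hp0 : (0 : ℝ) < p := lt_of_lt_of_le one_pos hp1
  set B : ℝ → ℝ := fun x => Real.exp (-(v₀ + k' * x) ^ p) with hBdef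
  -- derivative of B
  have hB : ∀ x : ℝ, HasDerivAt B
      (Real.exp (-(v₀ + k' * x) ^ p) * -(k' * p * (v₀ + k' * x) ^ (p - 1))) x := by
    intro x
    have h1 : HasDerivAt (fun x : ℝ => v₀ + k' * x) k' x := by
      simpa using ((hasDerivAt_id x).const_mul k').const_add v₀
    have h2 := (h1.rpow_const (p := p) (Or.inr hp1)).neg
    have h3 := h2.exp
    exact h3
  have hBc : Continuous B := by
    rw [continuous_iff_continuousAt]
    exact fun x => (hB x).continuousAt
  intro t ht
  by_contra hcon
  push_neg at hcon
  -- the set T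
  set T : Set ℝ := {x | (0 ≤ x ∧ x ≤ t) ∧ ∀ y, x ≤ y → y ≤ t → B y ≤ φ y} with hTdef
  have htT : t ∈ T := by
    refine ⟨⟨ht, le_rfl⟩, fun y hy1 hy2 => ?_⟩
    have : y = t := le_antisymm hy2 hy1
    subst this
    exact hcon.le
  have hTne : T.Nonempty := ⟨t, htT⟩
  have hTbdd : BddBelow T := ⟨0, fun x hx => hx.1.1⟩
  set x₁ := sInf T with hx₁def
  have hx₁0 : 0 ≤ x₁ := le_csInf hTne fun x hx => hx.1.1
  have hx₁t : x₁ ≤ t := csInf_le hTbdd htT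
  have ha : ∀ y, x₁ < y → y ≤ t → B y ≤ φ y := by
    intro y hy1 hy2
    obtain ⟨x, hxT, hxy⟩ := exists_lt_of_csInf_lt hTne hy1
    exact hxT.2 y hxy.le hy2
  have hφc : ContinuousOn φ (Set.Icc 0 t) := hcont t ht
  -- B x₁ ≤ φ x₁
  have hx₁φ : B x₁ ≤ φ x₁ := by
    rcases eq_or_lt_of_le hx₁t with heq | hlt
    · rw [heq]; exact hcon.le
    · haveI hne : (nhdsWithin x₁ (Set.Ioo x₁ t)).NeBot := by
        apply mem_closure_iff_nhdsWithin_neBot.1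
        rw [closure_Ioo hlt.ne]
        exact ⟨le_rfl, hlt.le⟩
      have hφt : Tendsto φ (nhdsWithin x₁ (Set.Ioo x₁ t)) (nhds (φ x₁)) := by
        have h0 := hφc.continuousWithinAt (⟨hx₁0, hx₁t⟩ : x₁ ∈ Set.Icc 0 t)
        exact h0.mono_left (nhdsWithin_mono _ (fun y hy => ⟨hx₁0.trans hy.1.le, hy.2.le⟩))
      have hBt : Tendsto B (nhdsWithin x₁ (Set.Ioo x₁ t)) (nhds (B x₁)) :=
        (hBc.continuousAt.tendsto).mono_left nhdsWithin_le_nhds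
      refine le_of_tendsto_of_tendsto hBt hφt ?_
      filter_upwards [self_mem_nhdsWithin] with y hy
      exact ha y hy.1 hy.2.le
  have hmem : ∀ y, x₁ ≤ y → y ≤ t → B y ≤ φ y := by
    intro y h1 h2
    rcases eq_or_lt_of_le h1 with heq | hlt
    · rw [← heq]; exact hx₁φ
    · exact ha y hlt h2
  have hBpos : ∀ x, 0 < B x := fun x => Real.exp_pos _
  -- x₁ > 0
  have hx₁pos : 0 < x₁ := by
    rcases lt_or_eq_of_le hx₁0 with h | h
    · exact h
    · exfalso
      have hB0 : (1 : ℝ) / 2 < B 0 := by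
        have h1 : Real.exp (-Real.log 2) < Real.exp (-(v₀ ^ p)) :=
          Real.exp_lt_exp.2 (by linarith)
        have h2 : Real.exp (-Real.log 2) = 1 / 2 := by
          rw [Real.exp_neg, Real.exp_log (by norm_num : (0:ℝ) < 2)]
          norm_num
        calc (1 : ℝ) / 2 = Real.exp (-Real.log 2) := h2.symm
          _ < Real.exp (-(v₀ ^ p)) := h1
          _ = B 0 := by simp [hBdef]
      have h3 := hx₁φ
      rw [← h] at h3
      linarith
  have hIoo : Set.Ioo 0 x₁ ∈ nhdsWithin x₁ (Set.Iio x₁) :=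
    mem_nhdsLT_iff_exists_Ioo_subset.2 ⟨0, hx₁pos, subset_rfl⟩
  -- eventually below x₁, B ≤ φ
  have hev : ∀ᶠ s in nhdsWithin x₁ (Set.Iio x₁), B s ≤ φ s := by
    rcases eq_or_lt_of_le hx₁φ with heq | hlt
    · -- touching case: slope argument
      have hφx₁pos : 0 < φ x₁ := heq ▸ hBpos x₁
      have hder := hderiv x₁ hx₁pos hφx₁pos
      have hv : 0 < v₀ + k' * x₁ := by positivity
      have hN : 0 < (n : ℝ) ^ ((1 : ℝ) / p) :=
        Real.rpow_pos_of_pos (by exact_mod_cast Nat.lt_of_lt_of_le Nat.zero_lt_one hn) _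
      have hlog : Real.log (1 / φ x₁) = (v₀ + k' * x₁) ^ p := by
        rw [← heq]
        simp only [hBdef]
        rw [one_div, ← Real.exp_neg, neg_neg, Real.log_exp]
      have hvp1 : ((v₀ + k' * x₁) ^ p) ^ (1 - 1 / p) = (v₀ + k' * x₁) ^ (p - 1) := by
        rw [← Real.rpow_mul hv.le]
        congr 1
        field_simp
      have hvp1pos : 0 < (v₀ + k' * x₁) ^ (p - 1) := Real.rpow_pos_of_pos hv _
      have hL : -(c * (n : ℝ) ^ ((1 : ℝ) / p) * φ x₁ * (Real.log (1 / φ x₁)) ^ (1 - 1 / p))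
          = -(c * (n : ℝ) ^ ((1 : ℝ) / p) * B x₁ * (v₀ + k' * x₁) ^ (p - 1)) := by
        rw [hlog, hvp1, heq]
      have hLBd : -(c * (n : ℝ) ^ ((1 : ℝ) / p) * B x₁ * (v₀ + k' * x₁) ^ (p - 1))
          < Real.exp (-(v₀ + k' * x₁) ^ p) * -(k' * p * (v₀ + k' * x₁) ^ (p - 1)) := by
        have hBx : B x₁ = Real.exp (-(v₀ + k' * x₁) ^ p) := rfl
        rw [hBx]
        have h1 := mul_lt_mul_of_pos_right hk'
          (mul_pos hvp1pos (Real.exp_pos (-(v₀ + k' * x₁) ^ p)))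
        nlinarith
      set m := (-(c * (n : ℝ) ^ ((1 : ℝ) / p) * B x₁ * (v₀ + k' * x₁) ^ (p - 1))
          + Real.exp (-(v₀ + k' * x₁) ^ p) * -(k' * p * (v₀ + k' * x₁) ^ (p - 1))) / 2 with hmdef
      have hLm : -(c * (n : ℝ) ^ ((1 : ℝ) / p) * B x₁ * (v₀ + k' * x₁) ^ (p - 1)) < m := by
        rw [hmdef]; linarith
      have hmBd : m < Real.exp (-(v₀ + k' * x₁) ^ p) * -(k' * p * (v₀ + k' * x₁) ^ (p - 1)) := by
        rw [hmdef]; linarith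
      have hbdd : Filter.IsBoundedUnder (· ≤ ·) (nhdsWithin x₁ (Set.Iio x₁))
          (fun s => (φ x₁ - φ s) / (x₁ - s)) := by
        apply Filter.isBoundedUnder_of_eventually_le (a := (0:ℝ))
        filter_upwards [hIoo] with s hs
        apply div_nonpos_of_nonpos_of_nonneg
        · have := hmono (Set.mem_Ici.2 hs.1.le) (Set.mem_Ici.2 hx₁0) hs.2.le
          linarith
        · linarith [hs.2]
      have hev1 : ∀ᶠ s in nhdsWithin x₁ (Set.Iio x₁), (φ x₁ - φ s) / (x₁ - s) < m := by
        apply Filter.eventually_lt_of_limsup_lt _ hbdd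
        calc Filter.limsup (fun s => (φ x₁ - φ s) / (x₁ - s)) (nhdsWithin x₁ (Set.Iio x₁))
            ≤ -(c * (n : ℝ) ^ ((1 : ℝ) / p) * φ x₁ * (Real.log (1 / φ x₁)) ^ (1 - 1 / p)) := hder
          _ = -(c * (n : ℝ) ^ ((1 : ℝ) / p) * B x₁ * (v₀ + k' * x₁) ^ (p - 1)) := hL
          _ < m := hLm
      have hev2 : ∀ᶠ s in nhdsWithin x₁ (Set.Iio x₁), m < (B x₁ - B s) / (x₁ - s) := by
        have hslope : Tendsto (slope B x₁) (nhdsWithin x₁ {x₁}ᶜ)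
            (nhds (Real.exp (-(v₀ + k' * x₁) ^ p) * -(k' * p * (v₀ + k' * x₁) ^ (p - 1)))) :=
          hasDerivAt_iff_tendsto_slope.1 (hB x₁)
        have hslope' := hslope.mono_left
          (nhdsWithin_mono x₁ (fun y (hy : y ∈ Set.Iio x₁) => ne_of_lt hy))
        have h5 := hslope'.eventually_const_lt hmBd
        filter_upwards [h5, hIoo] with s hs hs2
        rw [slope_def_field] at hs
        have heq2 : (B s - B x₁) / (s - x₁) = (B x₁ - B s) / (x₁ - s) := by
          rw [← neg_div_neg_eq]
          congr 1 <;> ring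
        rw [heq2] at hs
        exact hs
      filter_upwards [hev1, hev2, hIoo] with s h1 h2 hs
      have hpos : 0 < x₁ - s := by linarith [hs.2]
      rw [div_lt_iff₀ hpos] at h1
      rw [lt_div_iff₀ hpos] at h2
      nlinarith
    · -- strict case: continuity argument
      have hφt : Tendsto φ (nhdsWithin x₁ (Set.Ioo 0 x₁)) (nhds (φ x₁)) := by
        have h0 := hφc.continuousWithinAt (⟨hx₁0, hx₁t⟩ : x₁ ∈ Set.Icc 0 t)
        exact h0.mono_left (nhdsWithin_mono _
          (fun y hy => ⟨hy.1.le, le_trans hy.2.le hx₁t⟩))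
      have hBt : Tendsto B (nhdsWithin x₁ (Set.Ioo 0 x₁)) (nhds (B x₁)) :=
        (hBc.continuousAt.tendsto).mono_left nhdsWithin_le_nhds
      have hev0 : ∀ᶠ s in nhdsWithin x₁ (Set.Ioo 0 x₁), B s < φ s := by
        have h4 : Tendsto (fun s => φ s - B s) (nhdsWithin x₁ (Set.Ioo 0 x₁))
            (nhds (φ x₁ - B x₁)) := hφt.sub hBt
        have h2 := h4.eventually_const_lt (show (0:ℝ) < φ x₁ - B x₁ by linarith)
        filter_upwards [h2] with s hs; linarith
      rw [eventually_nhdsWithin_iff] at hev0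
      have h1' : ∀ᶠ s in nhdsWithin x₁ (Set.Iio x₁), s ∈ Set.Ioo 0 x₁ → B s < φ s :=
        mem_nhdsWithin_of_mem_nhds hev0
      filter_upwards [h1', hIoo] with s h1 h2
      exact (h1 h2).le
  obtain ⟨l, hl1, hl2⟩ := mem_nhdsLT_iff_exists_Ioo_subset.1 hev
  set x' := (max l 0 + x₁) / 2 with hx'def
  have hml : max l 0 < x₁ := max_lt hl1 hx₁pos
  have hx'1 : max l 0 < x' := by rw [hx'def]; linarith
  have hx'2 : x' < x₁ := by rw [hx'def]; linarith
  have hx'0 : 0 ≤ x' := by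
    have := le_max_right l 0
    rw [hx'def]; linarith
  have hx'T : x' ∈ T := by
    refine ⟨⟨hx'0, by linarith⟩, fun y hy1 hy2 => ?_⟩
    rcases lt_or_ge y x₁ with hy | hy
    · exact hl2 ⟨lt_of_le_of_lt (le_max_left l 0) (lt_of_lt_of_le hx'1 hy1), hy⟩
    · exact hmem y hy hy2
  have hfin := csInf_le hTbdd hx'T
  rw [← hx₁def] at hfin
  linarith

/-- if `φ : [0,∞) → [0,1/2]` is nonincreasing, absolutely continuous,
and its left upper derivative satisfies
`φ'(h) ≤ -c n^{1/p} φ(h) log^{1-1/p}(1/φ(h))` whenever `φ(h) > 0`, then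
`φ(h) ≤ (1/2) exp(-(c/p)^p n h^p)` for all `h ≥ 0`. -/
theorem gaussian_type_decay_from_differential_inequality
    (c : ℝ) (hc : 0 < c) (n : ℕ) (hn : 1 ≤ n) (p : ℝ) (hp1 : 1 ≤ p) (hp2 : p ≤ 2)
    (φ : ℝ → ℝ) (hmono : AntitoneOn φ (Set.Ici 0))
    (hrange : ∀ h : ℝ, 0 ≤ h → φ h ∈ Set.Icc (0 : ℝ) (1 / 2))
    -- absolute continuity: `φ` is an integral of some locally integrable `g`
    (hAC : ∃ g : ℝ → ℝ, (∀ s t : ℝ, 0 ≤ s → s ≤ t → IntervalIntegrable g volume s t) ∧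
      ∀ s t : ℝ, 0 ≤ s → s ≤ t → φ t - φ s = ∫ u in s..t, g u)
    -- the left upper derivative bound
    (hderiv : ∀ h : ℝ, 0 < h → 0 < φ h →
      Filter.limsup (fun s => (φ h - φ s) / (h - s)) (nhdsWithin h (Set.Iio h)) ≤
        -(c * (n : ℝ) ^ ((1 : ℝ) / p) * φ h * (Real.log (1 / φ h)) ^ (1 - 1 / p))) :
    ∀ h : ℝ, 0 ≤ h → φ h ≤ (1 / 2) * Real.exp (-((c / p) ^ p * n * h ^ p)) := by
  have hp0 : (0 : ℝ) < p := lt_of_lt_of_le one_pos hp1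
  have hlog2 : (0 : ℝ) < Real.log 2 := Real.log_pos (by norm_num)
  have hN : (0 : ℝ) < (n : ℝ) ^ ((1 : ℝ) / p) :=
    Real.rpow_pos_of_pos (by exact_mod_cast Nat.lt_of_lt_of_le Nat.zero_lt_one hn) _
  -- continuity of φ on Icc 0 T
  obtain ⟨g, hgint, hgrep⟩ := hAC
  have hcont : ∀ T : ℝ, 0 ≤ T → ContinuousOn φ (Set.Icc 0 T) := by
    intro T hT
    have hint : IntervalIntegrable g volume 0 T := hgint 0 T le_rfl hT
    have hprim := intervalIntegral.continuousOn_primitive_interval'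
      (a := 0) (b₁ := 0) (b₂ := T) hint (by rw [Set.uIcc_of_le hT]; exact ⟨le_rfl, hT⟩)
    rw [Set.uIcc_of_le hT] at hprim
    refine ((continuousOn_const (c := φ 0)).add hprim).congr ?_
    intro x hx
    have := hgrep 0 x le_rfl hx.1
    simp only [Pi.add_apply]
    linarith
  intro h hh
  -- key estimate for each ε
  have key : ∀ ε : ℝ, 0 < ε → ε < 1 → ε < Real.log 2 →
      φ h ≤ Real.exp (-((Real.log 2 - ε) ^ ((1:ℝ)/p)
        + ((1 - ε) * (c / p) * (n : ℝ) ^ ((1 : ℝ) / p)) * h) ^ p) := by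
    intro ε h1 h2 h3
    refine comparison_aux c p hc hp1 n hn φ hmono (hrange 0 le_rfl).2 hcont hderiv
      ((Real.log 2 - ε) ^ ((1:ℝ)/p)) ((1 - ε) * (c / p) * (n : ℝ) ^ ((1 : ℝ) / p))
      (Real.rpow_pos_of_pos (by linarith) _)
      (mul_pos (mul_pos (by linarith) (div_pos hc hp0)) hN) ?_ ?_ h hh
    · have hpc : p * ((1 - ε) * (c / p) * (n : ℝ) ^ ((1 : ℝ) / p))
          = (1 - ε) * (c * (n : ℝ) ^ ((1 : ℝ) / p)) := by
        field_simp
      rw [hpc]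
      nlinarith [mul_pos hc hN]
    · have he : ((Real.log 2 - ε) ^ ((1:ℝ)/p)) ^ p = Real.log 2 - ε := by
        rw [← Real.rpow_mul (by linarith : (0:ℝ) ≤ Real.log 2 - ε),
          one_div_mul_cancel hp0.ne', Real.rpow_one]
      rw [he]
      linarith
  -- pass to the limit ε → 0⁺
  have hNnn : (0:ℝ) ≤ (n : ℝ) ^ ((1 : ℝ) / p) := hN.le
  set N := (n : ℝ) ^ ((1 : ℝ) / p) with hNdef
  set F : ℝ → ℝ := fun ε => Real.exp (-(((Real.log 2 - ε) ^ ((1:ℝ)/p))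
      + ((1 - ε) * (c / p) * N) * h) ^ p) with hFdef
  have cA : ContinuousAt F 0 := by
    have l1 : ContinuousAt (fun ε : ℝ => Real.log 2 - ε) 0 := by fun_prop
    have l2 : ContinuousAt (fun ε : ℝ => (Real.log 2 - ε) ^ ((1:ℝ)/p)) 0 := by
      refine l1.rpow_const (Or.inl ?_)
      simpa using hlog2.ne'
    have l3 : ContinuousAt
        (fun ε : ℝ => (Real.log 2 - ε) ^ ((1:ℝ)/p) + ((1 - ε) * (c / p) * N) * h) 0 := by
      apply l2.add
      fun_prop
    have l4 := (l3.rpow_const (Or.inr hp0.le)).neg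
    exact Real.continuous_exp.continuousAt.comp l4
  have hlim : Filter.Tendsto F (nhdsWithin 0 (Set.Ioi 0)) (nhds (F 0)) :=
    cA.tendsto.mono_left nhdsWithin_le_nhds
  have hev : ∀ᶠ ε in nhdsWithin (0:ℝ) (Set.Ioi 0), φ h ≤ F ε := by
    have hmem : Set.Ioo (0:ℝ) (min 1 (Real.log 2)) ∈ nhdsWithin (0:ℝ) (Set.Ioi 0) :=
      Ioo_mem_nhdsGT_of_mem ⟨le_rfl, lt_min one_pos hlog2⟩
    filter_upwards [hmem] with ε hε
    exact key ε hε.1 (lt_of_lt_of_le hε.2 (min_le_left _ _))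
      (lt_of_lt_of_le hε.2 (min_le_right _ _))
  have hfh : φ h ≤ F 0 := ge_of_tendsto hlim hev
  have hF0 : F 0 = Real.exp (-(((Real.log 2) ^ ((1:ℝ)/p)) + ((c / p) * N) * h) ^ p) := by
    simp [hFdef]
  rw [hF0] at hfh
  -- final algebra
  have ha1 : ((Real.log 2) ^ ((1:ℝ)/p)) ^ p = Real.log 2 := by
    rw [← Real.rpow_mul hlog2.le, one_div_mul_cancel hp0.ne', Real.rpow_one]
  have hb1 : (((c / p) * N) * h) ^ p = (c / p) ^ p * (n : ℝ) * h ^ p := by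
    rw [Real.mul_rpow (by positivity) hh, Real.mul_rpow (by positivity) hNnn, hNdef,
      ← Real.rpow_mul (Nat.cast_nonneg n), one_div_mul_cancel hp0.ne', Real.rpow_one]
  have hsup : Real.log 2 + (c / p) ^ p * (n : ℝ) * h ^ p
      ≤ (((Real.log 2) ^ ((1:ℝ)/p)) + ((c / p) * N) * h) ^ p := by
    calc Real.log 2 + (c / p) ^ p * (n : ℝ) * h ^ p
        = ((Real.log 2) ^ ((1:ℝ)/p)) ^ p + (((c / p) * N) * h) ^ p := by rw [ha1, hb1]
      _ ≤ _ := rpow_superadd (by positivity) (by positivity) hp1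
  have hfinal : Real.exp (-(((Real.log 2) ^ ((1:ℝ)/p)) + ((c / p) * N) * h) ^ p)
      ≤ (1 / 2) * Real.exp (-((c / p) ^ p * (n : ℝ) * h ^ p)) := by
    have h2 : Real.exp (-Real.log 2) = 1 / 2 := by
      rw [Real.exp_neg, Real.exp_log (by norm_num : (0:ℝ) < 2)]
      norm_num
    calc Real.exp (-(((Real.log 2) ^ ((1:ℝ)/p)) + ((c / p) * N) * h) ^ p)
        ≤ Real.exp (-(Real.log 2 + (c / p) ^ p * (n : ℝ) * h ^ p)) :=
          Real.exp_le_exp.2 (neg_le_neg hsup)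
      _ = Real.exp (-Real.log 2) * Real.exp (-((c / p) ^ p * (n : ℝ) * h ^ p)) := by
          rw [← Real.exp_add]; ring_nf
      _ = (1 / 2) * Real.exp (-((c / p) ^ p * (n : ℝ) * h ^ p)) := by rw [h2]
  exact hfh.trans hfinal
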